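/- Non-negativity of the synergy term: I(Z;X,Y) − I(Z;X) − I(Z;Y) + I_pr(X↘Y;Z) ≥ 0; consequently, the synergistic partial information I(Z;X,Y) − I(Z;X) − I(Z;Y) + I_red(Z;X,Y) ≥ 0. -/

import Mathlib

open scoped BigOperators
set_option linter.unusedSectionVars false

/-- `p` is a probability mass function on a finite type. -/
def IsPMF {α : Type*} [Fintype α] (p : α → ℝ) : Prop :=
  (∀ a, 0 ≤ p a) ∧ ∑ a, p a = 1

/-- Kullback–Leibler divergence `D(u‖v) = Σ u log (u/v)` (with the convention `0 log 0 = 0`),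
`⊤` if absolute continuity fails, i.e. if `u a > 0 = v a` for some `a`. -/
noncomputable def klDiv {α : Type*} [Fintype α] (u v : α → ℝ) : EReal :=
  if ∀ a, 0 < u a → 0 < v a then ((∑ a, u a * Real.log (u a / v a) : ℝ) : EReal) else ⊤

variable {𝓧 𝓨 𝓩 : Type*} [Fintype 𝓧] [Fintype 𝓨] [Fintype 𝓩]

/-- Marginal distribution of the first variable `X`. -/
noncomputable def margX (p : 𝓧 × 𝓨 × 𝓩 → ℝ) (x : 𝓧) : ℝ := ∑ y, ∑ z, p (x, y, z)

/-- Marginal distribution of the second variable `Y`. -/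
noncomputable def margY (p : 𝓧 × 𝓨 × 𝓩 → ℝ) (y : 𝓨) : ℝ := ∑ x, ∑ z, p (x, y, z)

/-- Marginal distribution of the third variable `Z`. -/
noncomputable def margZ (p : 𝓧 × 𝓨 × 𝓩 → ℝ) (z : 𝓩) : ℝ := ∑ x, ∑ y, p (x, y, z)

/-- Joint marginal `p(x,z)`. -/
noncomputable def margXZ (p : 𝓧 × 𝓨 × 𝓩 → ℝ) (x : 𝓧) (z : 𝓩) : ℝ := ∑ y, p (x, y, z)

/-- Joint marginal `p(y,z)`. -/
noncomputable def margYZ (p : 𝓧 × 𝓨 × 𝓩 → ℝ) (y : 𝓨) (z : 𝓩) : ℝ := ∑ x, p (x, y, z)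

/-- Joint marginal `p(x,y)`. -/
noncomputable def margXY (p : 𝓧 × 𝓨 × 𝓩 → ℝ) (x : 𝓧) (y : 𝓨) : ℝ := ∑ z, p (x, y, z)

/-- Conditional distribution `p(·|x)` of `Z` given `X = x`. -/
noncomputable def condX (p : 𝓧 × 𝓨 × 𝓩 → ℝ) (x : 𝓧) : 𝓩 → ℝ :=
  fun z => margXZ p x z / margX p x

/-- Conditional distribution `p(·|y)` of `Z` given `Y = y`. -/
noncomputable def condY (p : 𝓧 × 𝓨 × 𝓩 → ℝ) (y : 𝓨) : 𝓩 → ℝ :=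
  fun z => margYZ p y z / margY p y

/-- Conditional distribution `p(·|x,y)` of `Z` given `(X,Y) = (x,y)`. -/
noncomputable def condXY (p : 𝓧 × 𝓨 × 𝓩 → ℝ) (x : 𝓧) (y : 𝓨) : 𝓩 → ℝ :=
  fun z => p (x, y, z) / margXY p x y

/-- `C_X`: the convex hull of the conditionals `{p(·|x) : p(x) > 0}`. -/
noncomputable def CXhull (p : 𝓧 × 𝓨 × 𝓩 → ℝ) : Set (𝓩 → ℝ) :=
  convexHull ℝ {q | ∃ x, 0 < margX p x ∧ q = condX p x}

/-- `C_Y`: the convex hull of the conditionals `{p(·|y) : p(y) > 0}`. -/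
noncomputable def CYhull (p : 𝓧 × 𝓨 × 𝓩 → ℝ) : Set (𝓩 → ℝ) :=
  convexHull ℝ {q | ∃ y, 0 < margY p y ∧ q = condY p y}

/-- Mutual information `I(Z;X)` (terms with `p(x,z) = 0` vanish). -/
noncomputable def miZX (p : 𝓧 × 𝓨 × 𝓩 → ℝ) : ℝ :=
  ∑ x, ∑ z, margXZ p x z * Real.log (margXZ p x z / (margX p x * margZ p z))

/-- Mutual information `I(Z;Y)`. -/
noncomputable def miZY (p : 𝓧 × 𝓨 × 𝓩 → ℝ) : ℝ :=
  ∑ y, ∑ z, margYZ p y z * Real.log (margYZ p y z / (margY p y * margZ p z))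

/-- Mutual information `I(Z;X,Y)` between `Z` and the joint variable `(X,Y)`. -/
noncomputable def miZXY (p : 𝓧 × 𝓨 × 𝓩 → ℝ) : ℝ :=
  ∑ x, ∑ y, ∑ z, p (x, y, z) * Real.log (p (x, y, z) / (margXY p x y * margZ p z))

/-- Projected information `I_pr(X ↘ Y; Z) =
`Σ_{x : p(x)>0} p(x)·[D(p(·|x)‖p_Z) − inf_{q ∈ C_Y} D(p(·|x)‖q)]`. -/
noncomputable def IprXY (p : 𝓧 × 𝓨 × 𝓩 → ℝ) : ℝ :=
  ∑ x, if 0 < margX p x then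
      margX p x * ((klDiv (condX p x) (margZ p)).toReal -
        (⨅ q ∈ CYhull p, klDiv (condX p x) q).toReal)
    else 0

/-- Projected information `I_pr(Y ↘ X; Z)`. -/
noncomputable def IprYX (p : 𝓧 × 𝓨 × 𝓩 → ℝ) : ℝ :=
  ∑ y, if 0 < margY p y then
      margY p y * ((klDiv (condY p y) (margZ p)).toReal -
        (⨅ q ∈ CXhull p, klDiv (condY p y) q).toReal)
    else 0

/-- Redundant information `I_red(Z;X,Y) = min {I_pr(X↘Y;Z), I_pr(Y↘X;Z)}`. -/
noncomputable def Ired (p : 𝓧 × 𝓨 × 𝓩 → ℝ) : ℝ := min (IprXY p) (IprYX p)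

/-- The log-sum inequality. -/
lemma log_sum_ineq {ι : Type*} (s : Finset ι) (a b : ι → ℝ)
    (ha : ∀ i ∈ s, 0 ≤ a i) (hb : ∀ i ∈ s, 0 ≤ b i)
    (hab : ∀ i ∈ s, b i = 0 → a i = 0) :
    (∑ i ∈ s, a i) * Real.log ((∑ i ∈ s, a i) / (∑ i ∈ s, b i)) ≤
      ∑ i ∈ s, a i * Real.log (a i / b i) := by
  set A := ∑ i ∈ s, a i with hA
  set B := ∑ i ∈ s, b i with hB
  rcases eq_or_lt_of_le (Finset.sum_nonneg ha) with h0 | hApos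
  · -- A = 0, all a i = 0
    have hall : ∀ i ∈ s, a i = 0 := by
      intro i hi
      exact le_antisymm (by
        have := Finset.sum_eq_zero_iff_of_nonneg ha |>.mp h0.symm
        exact le_of_eq (this i hi)) (ha i hi)
    have h1 : ∑ i ∈ s, a i * Real.log (a i / b i) = 0 :=
      Finset.sum_eq_zero fun i hi => by rw [hall i hi]; ring
    have h2 : A = 0 := hA.trans h0.symm
    rw [h1, h2]
    simp
  · have hBpos : 0 < B := by
      obtain ⟨i, hi, hai⟩ : ∃ i ∈ s, 0 < a i := by
        by_contra hcon
        push_neg at hcon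
        have : A ≤ 0 := Finset.sum_nonpos fun i hi => hcon i hi
        linarith
      have hbi : 0 < b i := by
        rcases lt_or_eq_of_le (hb i hi) with h | h
        · exact h
        · exact absurd (hab i hi h.symm) hai.ne'
      exact lt_of_lt_of_le hbi (Finset.single_le_sum hb hi)
    have key : ∀ i ∈ s, a i - b i * (A / B) ≤
        a i * (Real.log (a i / b i) - Real.log (A / B)) := by
      intro i hi
      rcases eq_or_lt_of_le (ha i hi) with h0 | hai
      · rw [← h0]
        have : 0 ≤ b i * (A / B) := mul_nonneg (hb i hi) (div_nonneg hApos.le hBpos.le)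
        linarith
      · have hbi : 0 < b i := by
          rcases lt_or_eq_of_le (hb i hi) with h | h
          · exact h
          · exact absurd (hab i hi h.symm) hai.ne'
        have ht : 0 < a i * B / (b i * A) := by positivity
        have hlog : Real.log (a i / b i) - Real.log (A / B)
            = Real.log (a i * B / (b i * A)) := by
          rw [Real.log_div (by positivity) (by positivity),
            Real.log_div (by positivity) (by positivity),
            Real.log_div (by positivity) (by positivity),
            Real.log_mul (by positivity) (by positivity),
            Real.log_mul (by positivity) (by positivity)]
          ring
        rw [hlog]
        have h1 : 1 - (a i * B / (b i * A))⁻¹ ≤ Real.log (a i * B / (b i * A)) :=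
          Real.one_sub_inv_le_log_of_pos ht
        have h2 : (a i * B / (b i * A))⁻¹ = b i * A / (a i * B) := by
          field_simp
        rw [h2] at h1
        have h3 : a i * (1 - b i * A / (a i * B)) ≤ a i * Real.log (a i * B / (b i * A)) :=
          mul_le_mul_of_nonneg_left h1 hai.le
        have h4 : a i * (1 - b i * A / (a i * B)) = a i - b i * (A / B) := by
          field_simp
        linarith
    have hsum := Finset.sum_le_sum key
    have hl : ∑ i ∈ s, (a i - b i * (A / B)) = 0 := by
      rw [Finset.sum_sub_distrib, ← Finset.sum_mul, ← hB]
      field_simp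
      linarith
    have hr : ∑ i ∈ s, a i * (Real.log (a i / b i) - Real.log (A / B)) =
        (∑ i ∈ s, a i * Real.log (a i / b i)) - A * Real.log (A / B) := by
      simp only [mul_sub]
      rw [Finset.sum_sub_distrib, ← Finset.sum_mul, ← hA]
    rw [hl, hr] at hsum
    linarith



section Aux

variable {𝓧 𝓨 𝓩 : Type*} [Fintype 𝓧] [Fintype 𝓨] [Fintype 𝓩]

lemma margX_nonneg (p : 𝓧 × 𝓨 × 𝓩 → ℝ) (hp0 : ∀ a, 0 ≤ p a) (x : 𝓧) : 0 ≤ margX p x :=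
  Finset.sum_nonneg fun _ _ => Finset.sum_nonneg fun _ _ => hp0 _

lemma margY_nonneg (p : 𝓧 × 𝓨 × 𝓩 → ℝ) (hp0 : ∀ a, 0 ≤ p a) (y : 𝓨) : 0 ≤ margY p y :=
  Finset.sum_nonneg fun _ _ => Finset.sum_nonneg fun _ _ => hp0 _

lemma margZ_nonneg (p : 𝓧 × 𝓨 × 𝓩 → ℝ) (hp0 : ∀ a, 0 ≤ p a) (z : 𝓩) : 0 ≤ margZ p z :=
  Finset.sum_nonneg fun _ _ => Finset.sum_nonneg fun _ _ => hp0 _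

lemma margXZ_nonneg (p : 𝓧 × 𝓨 × 𝓩 → ℝ) (hp0 : ∀ a, 0 ≤ p a) (x : 𝓧) (z : 𝓩) :
    0 ≤ margXZ p x z := Finset.sum_nonneg fun _ _ => hp0 _

lemma margYZ_nonneg (p : 𝓧 × 𝓨 × 𝓩 → ℝ) (hp0 : ∀ a, 0 ≤ p a) (y : 𝓨) (z : 𝓩) :
    0 ≤ margYZ p y z := Finset.sum_nonneg fun _ _ => hp0 _

lemma margXY_nonneg (p : 𝓧 × 𝓨 × 𝓩 → ℝ) (hp0 : ∀ a, 0 ≤ p a) (x : 𝓧) (y : 𝓨) :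
    0 ≤ margXY p x y := Finset.sum_nonneg fun _ _ => hp0 _

lemma margX_eq_sum_margXZ (p : 𝓧 × 𝓨 × 𝓩 → ℝ) (x : 𝓧) :
    margX p x = ∑ z, margXZ p x z := Finset.sum_comm

lemma margY_eq_sum_margYZ (p : 𝓧 × 𝓨 × 𝓩 → ℝ) (y : 𝓨) :
    margY p y = ∑ z, margYZ p y z := Finset.sum_comm

lemma margX_eq_sum_margXY (p : 𝓧 × 𝓨 × 𝓩 → ℝ) (x : 𝓧) :
    margX p x = ∑ y, margXY p x y := rfl

lemma margY_eq_sum_margXY (p : 𝓧 × 𝓨 × 𝓩 → ℝ) (y : 𝓨) :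
    margY p y = ∑ x, margXY p x y := rfl

lemma margZ_eq_sum_margXZ (p : 𝓧 × 𝓨 × 𝓩 → ℝ) (z : 𝓩) :
    margZ p z = ∑ x, margXZ p x z := rfl

-- positivity propagation
lemma margXY_pos (p : 𝓧 × 𝓨 × 𝓩 → ℝ) (hp0 : ∀ a, 0 ≤ p a) {x y z} (h : 0 < p (x, y, z)) :
    0 < margXY p x y :=
  lt_of_lt_of_le h (Finset.single_le_sum (fun z _ => hp0 (x, y, z)) (Finset.mem_univ z))

lemma margYZ_pos (p : 𝓧 × 𝓨 × 𝓩 → ℝ) (hp0 : ∀ a, 0 ≤ p a) {x y z} (h : 0 < p (x, y, z)) :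
    0 < margYZ p y z :=
  lt_of_lt_of_le h (Finset.single_le_sum (fun x _ => hp0 (x, y, z)) (Finset.mem_univ x))

lemma margY_pos_of_margXY (p : 𝓧 × 𝓨 × 𝓩 → ℝ) (hp0 : ∀ a, 0 ≤ p a) {x y}
    (h : 0 < margXY p x y) : 0 < margY p y := by
  rw [margY_eq_sum_margXY]
  exact lt_of_lt_of_le h
    (Finset.single_le_sum (fun x' _ => margXY_nonneg p hp0 x' y) (Finset.mem_univ x))

lemma margY_pos_of_margYZ (p : 𝓧 × 𝓨 × 𝓩 → ℝ) (hp0 : ∀ a, 0 ≤ p a) {y z}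
    (h : 0 < margYZ p y z) : 0 < margY p y := by
  rw [margY_eq_sum_margYZ]
  exact lt_of_lt_of_le h
    (Finset.single_le_sum (fun z' _ => margYZ_nonneg p hp0 y z') (Finset.mem_univ z))

lemma margZ_pos_of_margXZ (p : 𝓧 × 𝓨 × 𝓩 → ℝ) (hp0 : ∀ a, 0 ≤ p a) {x z}
    (h : 0 < margXZ p x z) : 0 < margZ p z := by
  rw [margZ_eq_sum_margXZ]
  exact lt_of_lt_of_le h
    (Finset.single_le_sum (fun x' _ => margXZ_nonneg p hp0 x' z) (Finset.mem_univ x))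

lemma p_eq_zero_of_margX (p : 𝓧 × 𝓨 × 𝓩 → ℝ) (hp0 : ∀ a, 0 ≤ p a) {x}
    (h : margX p x = 0) (y : 𝓨) (z : 𝓩) : p (x, y, z) = 0 := by
  have h1 : ∑ y, ∑ z, p (x, y, z) = 0 := h
  have h2 := (Finset.sum_eq_zero_iff_of_nonneg
    (fun y _ => Finset.sum_nonneg fun z _ => hp0 (x, y, z))).mp h1 y (Finset.mem_univ y)
  exact (Finset.sum_eq_zero_iff_of_nonneg (fun z _ => hp0 (x, y, z))).mp h2 z (Finset.mem_univ z)

lemma margXZ_eq_zero_of_margX (p : 𝓧 × 𝓨 × 𝓩 → ℝ) (hp0 : ∀ a, 0 ≤ p a) {x}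
    (h : margX p x = 0) (z : 𝓩) : margXZ p x z = 0 :=
  Finset.sum_eq_zero fun y _ => p_eq_zero_of_margX p hp0 h y z

-- conditionals are PMFs
lemma condX_nonneg (p : 𝓧 × 𝓨 × 𝓩 → ℝ) (hp0 : ∀ a, 0 ≤ p a) (x : 𝓧) (z : 𝓩) :
    0 ≤ condX p x z :=
  div_nonneg (margXZ_nonneg p hp0 x z) (margX_nonneg p hp0 x)

lemma condY_nonneg (p : 𝓧 × 𝓨 × 𝓩 → ℝ) (hp0 : ∀ a, 0 ≤ p a) (y : 𝓨) (z : 𝓩) :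
    0 ≤ condY p y z :=
  div_nonneg (margYZ_nonneg p hp0 y z) (margY_nonneg p hp0 y)

lemma condX_sum (p : 𝓧 × 𝓨 × 𝓩 → ℝ) {x : 𝓧} (hx : 0 < margX p x) :
    ∑ z, condX p x z = 1 := by
  unfold condX
  rw [← Finset.sum_div, ← margX_eq_sum_margXZ, div_self hx.ne']

lemma condY_sum (p : 𝓧 × 𝓨 × 𝓩 → ℝ) {y : 𝓨} (hy : 0 < margY p y) :
    ∑ z, condY p y z = 1 := by
  unfold condY
  rw [← Finset.sum_div, ← margY_eq_sum_margYZ, div_self hy.ne']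

/-- Elements of `CYhull` are PMFs. -/
lemma CYhull_pmf (p : 𝓧 × 𝓨 × 𝓩 → ℝ) (hp0 : ∀ a, 0 ≤ p a) {q : 𝓩 → ℝ}
    (hq : q ∈ CYhull p) : (∀ z, 0 ≤ q z) ∧ ∑ z, q z = 1 := by
  have hsub : {q : 𝓩 → ℝ | ∃ y, 0 < margY p y ∧ q = condY p y} ⊆ stdSimplex ℝ 𝓩 := by
    rintro q ⟨y, hy, rfl⟩
    exact ⟨fun z => condY_nonneg p hp0 y z, condY_sum p hy⟩
  have := convexHull_min hsub (convex_stdSimplex ℝ 𝓩) hq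
  exact this

lemma CXhull_pmf (p : 𝓧 × 𝓨 × 𝓩 → ℝ) (hp0 : ∀ a, 0 ≤ p a) {q : 𝓩 → ℝ}
    (hq : q ∈ CXhull p) : (∀ z, 0 ≤ q z) ∧ ∑ z, q z = 1 := by
  have hsub : {q : 𝓩 → ℝ | ∃ x, 0 < margX p x ∧ q = condX p x} ⊆ stdSimplex ℝ 𝓩 := by
    rintro q ⟨x, hx, rfl⟩
    exact ⟨fun z => condX_nonneg p hp0 x z, condX_sum p hx⟩
  have := convexHull_min hsub (convex_stdSimplex ℝ 𝓩) hq
  exact this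

/-- Gibbs inequality: KL divergence between (sub)PMFs is nonnegative. -/
lemma klDiv_nonneg {α : Type*} [Fintype α] (u v : α → ℝ)
    (hu0 : ∀ a, 0 ≤ u a) (hu1 : ∑ a, u a = 1) (hv0 : ∀ a, 0 ≤ v a) (hv1 : ∑ a, v a = 1) :
    (0 : EReal) ≤ klDiv u v := by
  unfold klDiv
  split_ifs with h
  · have := log_sum_ineq Finset.univ u v (fun a _ => hu0 a) (fun a _ => hv0 a)
      (fun a _ hva => by
        by_contra hua
        have : 0 < u a := lt_of_le_of_ne (hu0 a) (Ne.symm hua)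
        exact absurd (h a this) (by rw [hva]; exact lt_irrefl 0))
    rw [hu1, hv1] at this
    simp only [div_one, Real.log_one, mul_one, one_mul] at this
    exact_mod_cast this
  · exact le_top

end Aux


section Main

variable {𝓧 𝓨 𝓩 : Type*} [Fintype 𝓧] [Fintype 𝓨] [Fintype 𝓩]

lemma margXZ_pos (p : 𝓧 × 𝓨 × 𝓩 → ℝ) (hp0 : ∀ a, 0 ≤ p a) {x y z} (h : 0 < p (x, y, z)) :
    0 < margXZ p x z :=
  lt_of_lt_of_le h (Finset.single_le_sum (fun y' _ => hp0 (x, y', z)) (Finset.mem_univ y))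

lemma margXY_eq_zero_of_margY (p : 𝓧 × 𝓨 × 𝓩 → ℝ) (hp0 : ∀ a, 0 ≤ p a) {y}
    (h : margY p y = 0) (x : 𝓧) : margXY p x y = 0 := by
  have h1 : margXY p x y ≤ margY p y := by
    rw [margY_eq_sum_margXY]
    exact Finset.single_le_sum (fun x' _ => margXY_nonneg p hp0 x' y) (Finset.mem_univ x)
  exact le_antisymm (h ▸ h1) (margXY_nonneg p hp0 x y)

/-- Step A: `miZX` as a sum of KL divergences. -/
lemma miZX_eq (p : 𝓧 × 𝓨 × 𝓩 → ℝ) (hp0 : ∀ a, 0 ≤ p a) :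
    miZX p = ∑ x, (if 0 < margX p x then
      margX p x * (klDiv (condX p x) (margZ p)).toReal else 0) := by
  unfold miZX
  refine Finset.sum_congr rfl fun x _ => ?_
  by_cases hx : 0 < margX p x
  · rw [if_pos hx]
    have habs : ∀ z, 0 < condX p x z → 0 < margZ p z := by
      intro z hz
      have hxz : 0 < margXZ p x z := by
        by_contra h
        push_neg at h
        have : margXZ p x z = 0 := le_antisymm h (margXZ_nonneg p hp0 x z)
        rw [condX, this, zero_div] at hz
        exact lt_irrefl 0 hz
      exact margZ_pos_of_margXZ p hp0 hxz
    rw [klDiv, if_pos habs, EReal.toReal_coe, Finset.mul_sum]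
    refine Finset.sum_congr rfl fun z _ => ?_
    by_cases hz : margXZ p x z = 0
    · simp [condX, hz]
    · have hc : condX p x z = margXZ p x z / margX p x := rfl
      rw [hc, ← mul_assoc, mul_div_cancel₀ _ hx.ne', div_div]
  · rw [if_neg hx]
    have hx0 : margX p x = 0 :=
      le_antisymm (by push_neg at hx; exact hx) (margX_nonneg p hp0 x)
    exact Finset.sum_eq_zero fun z _ => by
      rw [margXZ_eq_zero_of_margX p hp0 hx0 z, zero_mul]

/-- The mixture `q_x = Σ_y p(y|x) p(·|y)`. -/
noncomputable def qmix (p : 𝓧 × 𝓨 × 𝓩 → ℝ) (x : 𝓧) : 𝓩 → ℝ :=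
  fun z => ∑ y, (margXY p x y / margX p x) * condY p y z

lemma qmix_nonneg (p : 𝓧 × 𝓨 × 𝓩 → ℝ) (hp0 : ∀ a, 0 ≤ p a) (x : 𝓧) (z : 𝓩) :
    0 ≤ qmix p x z :=
  Finset.sum_nonneg fun y _ => mul_nonneg
    (div_nonneg (margXY_nonneg p hp0 x y) (margX_nonneg p hp0 x))
    (condY_nonneg p hp0 y z)

lemma qmix_pos (p : 𝓧 × 𝓨 × 𝓩 → ℝ) (hp0 : ∀ a, 0 ≤ p a) {x : 𝓧} (hx : 0 < margX p x)
    {z : 𝓩} (hz : 0 < margXZ p x z) : 0 < qmix p x z := by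
  obtain ⟨y, hy⟩ : ∃ y, 0 < p (x, y, z) := by
    by_contra h
    push_neg at h
    have : margXZ p x z ≤ 0 := Finset.sum_nonpos fun y _ => h y
    linarith
  have hXY : 0 < margXY p x y := margXY_pos p hp0 hy
  have hYZ : 0 < margYZ p y z := margYZ_pos p hp0 hy
  have hY : 0 < margY p y := margY_pos_of_margXY p hp0 hXY
  have hterm : 0 < (margXY p x y / margX p x) * condY p y z := by
    have : 0 < condY p y z := div_pos hYZ hY
    exact mul_pos (div_pos hXY hx) this
  have hle : (margXY p x y / margX p x) * condY p y z ≤ qmix p x z :=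
    Finset.single_le_sum (f := fun y' => (margXY p x y' / margX p x) * condY p y' z)
      (fun y' _ => mul_nonneg (div_nonneg (margXY_nonneg p hp0 x y') (margX_nonneg p hp0 x))
        (condY_nonneg p hp0 y' z)) (Finset.mem_univ y)
  exact lt_of_lt_of_le hterm hle

lemma qmix_mem (p : 𝓧 × 𝓨 × 𝓩 → ℝ) (hp0 : ∀ a, 0 ≤ p a) {x : 𝓧} (hx : 0 < margX p x) :
    qmix p x ∈ CYhull p := by
  classical
  set t : Finset 𝓨 := Finset.univ.filter fun y => 0 < margY p y with ht
  set w : 𝓨 → ℝ := fun y => margXY p x y / margX p x with hw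
  have hwzero : ∀ y, margY p y = 0 → w y = 0 := by
    intro y hy
    simp only [hw]
    rw [margXY_eq_zero_of_margY p hp0 hy x, zero_div]
  have hoff : ∀ y ∈ Finset.univ, y ∉ t → w y = 0 := by
    intro y _ hyt
    have : ¬ 0 < margY p y := by simpa [ht] using hyt
    exact hwzero y (le_antisymm (by push_neg at this; exact this) (margY_nonneg p hp0 y))
  have hw1 : ∑ y ∈ t, w y = 1 := by
    have h1 : ∑ y ∈ t, w y = ∑ y, w y :=
      Finset.sum_subset (Finset.subset_univ t) fun y hy hyt => hoff y hy hyt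
    rw [h1]
    simp only [hw]
    rw [← Finset.sum_div, ← margX_eq_sum_margXY, div_self hx.ne']
  have hmem : ∀ y ∈ t, condY p y ∈ {q : 𝓩 → ℝ | ∃ y, 0 < margY p y ∧ q = condY p y} := by
    intro y hy
    have : 0 < margY p y := by simpa [ht] using hy
    exact ⟨y, this, rfl⟩
  have hcm := Finset.centerMass_mem_convexHull t
    (fun y _ => div_nonneg (margXY_nonneg p hp0 x y) (margX_nonneg p hp0 x))
    (by rw [hw1]; exact one_pos) hmem
  have heq : qmix p x = t.centerMass w (fun y => condY p y) := by
    rw [Finset.centerMass_eq_of_sum_1 _ _ hw1]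
    funext z
    have : qmix p x z = ∑ y ∈ t, w y * condY p y z := by
      rw [eq_comm]
      exact Finset.sum_subset (Finset.subset_univ t) fun y _ hyt => by
        rw [hoff y (Finset.mem_univ y) hyt, zero_mul]
    rw [this]
    simp [Finset.sum_apply]
  rw [heq]
  exact hcm

lemma klDiv_qmix (p : 𝓧 × 𝓨 × 𝓩 → ℝ) (hp0 : ∀ a, 0 ≤ p a) {x : 𝓧} (hx : 0 < margX p x) :
    klDiv (condX p x) (qmix p x) =
      ((∑ z, condX p x z * Real.log (condX p x z / qmix p x z) : ℝ) : EReal) := by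
  rw [klDiv, if_pos]
  intro z hz
  have hxz : 0 < margXZ p x z := by
    by_contra h
    push_neg at h
    have : margXZ p x z = 0 := le_antisymm h (margXZ_nonneg p hp0 x z)
    rw [condX, this, zero_div] at hz
    exact lt_irrefl 0 hz
  exact qmix_pos p hp0 hx hxz

/-- Step E: the infimum over `C_Y` is bounded by the divergence to the mixture. -/
lemma infbound (p : 𝓧 × 𝓨 × 𝓩 → ℝ) (hp0 : ∀ a, 0 ≤ p a)
    {x : 𝓧} (hx : 0 < margX p x) :
    (⨅ q ∈ CYhull p, klDiv (condX p x) q).toReal ≤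
      ∑ z, condX p x z * Real.log (condX p x z / qmix p x z) := by
  set I := ⨅ q ∈ CYhull p, klDiv (condX p x) q with hI
  have h0 : (0 : EReal) ≤ I := by
    refine le_iInf₂ fun q hq => ?_
    obtain ⟨hq0, hq1⟩ := CYhull_pmf p hp0 hq
    exact klDiv_nonneg _ _ (fun z => condX_nonneg p hp0 x z) (condX_sum p hx) hq0 hq1
  have h1 : I ≤ klDiv (condX p x) (qmix p x) := iInf₂_le (qmix p x) (qmix_mem p hp0 hx)
  rw [klDiv_qmix p hp0 hx] at h1
  have hb : I ≠ ⊥ := fun h => by rw [h] at h0; exact absurd h0 (by simp)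
  have := EReal.toReal_le_toReal h1 hb (EReal.coe_ne_top _)
  rwa [EReal.toReal_coe] at this

end Main


section Main2

variable {𝓧 𝓨 𝓩 : Type*} [Fintype 𝓧] [Fintype 𝓨] [Fintype 𝓩]

/-- Step F inner: pointwise log-sum bound. -/
lemma claim2 (p : 𝓧 × 𝓨 × 𝓩 → ℝ) (hp0 : ∀ a, 0 ≤ p a) {x : 𝓧} (hx : 0 < margX p x) :
    margX p x * ∑ z, condX p x z * Real.log (condX p x z / qmix p x z) ≤
      ∑ z, ∑ y, p (x, y, z) *
        Real.log (p (x, y, z) / (margXY p x y * margYZ p y z / margY p y)) := by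
  rw [Finset.mul_sum]
  refine Finset.sum_le_sum fun z _ => ?_
  set a : 𝓨 → ℝ := fun y => p (x, y, z) with hadef
  set b : 𝓨 → ℝ := fun y => margXY p x y * margYZ p y z / margY p y with hbdef
  have hA : ∑ y, a y = margXZ p x z := rfl
  have hb0 : ∀ y ∈ Finset.univ, (0:ℝ) ≤ b y := fun y _ =>
    div_nonneg (mul_nonneg (margXY_nonneg p hp0 x y) (margYZ_nonneg p hp0 y z))
      (margY_nonneg p hp0 y)
  have ha0 : ∀ y ∈ Finset.univ, (0:ℝ) ≤ a y := fun y _ => hp0 _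
  have hab : ∀ y ∈ Finset.univ, b y = 0 → a y = 0 := by
    intro y _ hby
    by_contra h
    have hay : 0 < a y := lt_of_le_of_ne (hp0 _) (Ne.symm h)
    have h1 : 0 < margXY p x y := margXY_pos p hp0 hay
    have h2 : 0 < margYZ p y z := margYZ_pos p hp0 hay
    have h3 : 0 < margY p y := margY_pos_of_margXY p hp0 h1
    have : 0 < b y := div_pos (mul_pos h1 h2) h3
    rw [hby] at this
    exact lt_irrefl 0 this
  have hls := log_sum_ineq Finset.univ a b ha0 hb0 hab
  have hBq : margX p x * qmix p x z = ∑ y, b y := by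
    rw [qmix, Finset.mul_sum]
    refine Finset.sum_congr rfl fun y _ => ?_
    by_cases hy : margY p y = 0
    · rw [hbdef]
      simp only [margXY_eq_zero_of_margY p hp0 hy x, hy, zero_mul, zero_div, mul_zero,
        div_zero, mul_zero]
    · rw [hbdef, condY]
      field_simp
  by_cases hz : margXZ p x z = 0
  · -- both sides are zero
    have hcz : condX p x z = 0 := by rw [condX, hz, zero_div]
    have hz0 : ∀ y, a y = 0 := by
      intro y
      have := (Finset.sum_eq_zero_iff_of_nonneg ha0).mp (hA.trans hz) y (Finset.mem_univ y)
      exact this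
    have hr : ∑ y, a y * Real.log (a y / b y) = 0 :=
      Finset.sum_eq_zero fun y _ => by rw [hz0 y, zero_mul]
    rw [hcz, hr]
    simp
  · have hzpos : 0 < margXZ p x z := lt_of_le_of_ne (margXZ_nonneg p hp0 x z) (Ne.symm hz)
    have hq : 0 < qmix p x z := qmix_pos p hp0 hx hzpos
    have hB : 0 < ∑ y, b y := by rw [← hBq]; exact mul_pos hx hq
    have hcx : condX p x z = margXZ p x z / margX p x := rfl
    have hl : margX p x * (condX p x z * Real.log (condX p x z / qmix p x z)) =
        margXZ p x z * Real.log (margXZ p x z / (margX p x * qmix p x z)) := by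
      rw [hcx, div_div, ← mul_assoc, mul_comm (margX p x) (margXZ p x z / margX p x),
        div_mul_cancel₀ _ hx.ne']
    rw [hl]
    rw [hA, ← hBq] at hls
    exact hls

end Main2


section Main3

variable {𝓧 𝓨 𝓩 : Type*} [Fintype 𝓧] [Fintype 𝓨] [Fintype 𝓩]

/-- Step C: `I(Z;X,Y) − I(Z;Y)` as a triple sum. -/
lemma claim1 (p : 𝓧 × 𝓨 × 𝓩 → ℝ) (hp0 : ∀ a, 0 ≤ p a) :
    miZXY p - miZY p = ∑ x, ∑ z, ∑ y, p (x, y, z) *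
      Real.log (p (x, y, z) / (margXY p x y * margYZ p y z / margY p y)) := by
  have h1 : miZXY p = ∑ x, ∑ z, ∑ y,
      p (x, y, z) * Real.log (p (x, y, z) / (margXY p x y * margZ p z)) := by
    unfold miZXY
    exact Finset.sum_congr rfl fun x _ => Finset.sum_comm
  have h2 : miZY p = ∑ x, ∑ z, ∑ y,
      p (x, y, z) * Real.log (margYZ p y z / (margY p y * margZ p z)) := by
    unfold miZY
    calc ∑ y, ∑ z, margYZ p y z * Real.log (margYZ p y z / (margY p y * margZ p z))
        = ∑ y, ∑ z, ∑ x, p (x, y, z) * Real.log (margYZ p y z / (margY p y * margZ p z)) := by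
          refine Finset.sum_congr rfl fun y _ => Finset.sum_congr rfl fun z _ => ?_
          rw [margYZ, Finset.sum_mul]
      _ = ∑ z, ∑ y, ∑ x, p (x, y, z) * Real.log (margYZ p y z / (margY p y * margZ p z)) :=
          Finset.sum_comm
      _ = ∑ z, ∑ x, ∑ y, p (x, y, z) * Real.log (margYZ p y z / (margY p y * margZ p z)) :=
          Finset.sum_congr rfl fun z _ => Finset.sum_comm
      _ = ∑ x, ∑ z, ∑ y, p (x, y, z) * Real.log (margYZ p y z / (margY p y * margZ p z)) :=
          Finset.sum_comm
  rw [h1, h2, ← Finset.sum_sub_distrib]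
  refine Finset.sum_congr rfl fun x _ => ?_
  rw [← Finset.sum_sub_distrib]
  refine Finset.sum_congr rfl fun z _ => ?_
  rw [← Finset.sum_sub_distrib]
  refine Finset.sum_congr rfl fun y _ => ?_
  by_cases hp : p (x, y, z) = 0
  · rw [hp]; simp
  · have hpos : 0 < p (x, y, z) := lt_of_le_of_ne (hp0 _) (Ne.symm hp)
    have hXY : 0 < margXY p x y := margXY_pos p hp0 hpos
    have hYZ : 0 < margYZ p y z := margYZ_pos p hp0 hpos
    have hY : 0 < margY p y := margY_pos_of_margXY p hp0 hXY
    have hZ : 0 < margZ p z := margZ_pos_of_margXZ p hp0 (margXZ_pos p hp0 hpos)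
    rw [← mul_sub]
    congr 1
    rw [Real.log_div hpos.ne' (mul_pos hXY hZ).ne',
      Real.log_div hYZ.ne' (mul_pos hY hZ).ne',
      Real.log_div hpos.ne' (div_pos (mul_pos hXY hYZ) hY).ne',
      Real.log_mul hXY.ne' hZ.ne', Real.log_mul hY.ne' hZ.ne',
      Real.log_div (mul_pos hXY hYZ).ne' hY.ne', Real.log_mul hXY.ne' hYZ.ne']
    ring

/-- The key inequality. -/
lemma key (p : 𝓧 × 𝓨 × 𝓩 → ℝ) (hp : IsPMF p) :
    0 ≤ miZXY p - miZX p - miZY p + IprXY p := by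
  obtain ⟨hp0, _⟩ := hp
  have hIpr : IprXY p = (∑ x, if 0 < margX p x then
        margX p x * (klDiv (condX p x) (margZ p)).toReal else 0) -
      ∑ x, (if 0 < margX p x then
        margX p x * (⨅ q ∈ CYhull p, klDiv (condX p x) q).toReal else 0) := by
    rw [← Finset.sum_sub_distrib]
    refine Finset.sum_congr rfl fun x _ => ?_
    split_ifs with h
    · ring
    · ring
  have hmain : (∑ x, (if 0 < margX p x then
      margX p x * (⨅ q ∈ CYhull p, klDiv (condX p x) q).toReal else 0)) ≤
      ∑ x, ∑ z, ∑ y, p (x, y, z) *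
        Real.log (p (x, y, z) / (margXY p x y * margYZ p y z / margY p y)) := by
    refine Finset.sum_le_sum fun x _ => ?_
    by_cases hx : 0 < margX p x
    · rw [if_pos hx]
      calc margX p x * (⨅ q ∈ CYhull p, klDiv (condX p x) q).toReal
          ≤ margX p x * ∑ z, condX p x z * Real.log (condX p x z / qmix p x z) :=
            mul_le_mul_of_nonneg_left (infbound p hp0 hx) hx.le
        _ ≤ _ := claim2 p hp0 hx
    · rw [if_neg hx]
      have hx0 : margX p x = 0 :=
        le_antisymm (by push_neg at hx; exact hx) (margX_nonneg p hp0 x)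
      have : ∀ z y, p (x, y, z) = 0 := fun z y => p_eq_zero_of_margX p hp0 hx0 y z
      refine Finset.sum_nonneg fun z _ => Finset.sum_nonneg fun y _ => ?_
      rw [this z y, zero_mul]
  have hc1 := claim1 p hp0
  have hA := miZX_eq p hp0
  linarith [hmain, hc1, hA, hIpr]

end Main3


section Main4

variable {𝓧 𝓨 𝓩 : Type*} [Fintype 𝓧] [Fintype 𝓨] [Fintype 𝓩]

/-- The key inequality with the roles of `X` and `Y` swapped. -/
lemma key' (p : 𝓧 × 𝓨 × 𝓩 → ℝ) (hp : IsPMF p) :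
    0 ≤ miZXY p - miZX p - miZY p + IprYX p := by
  set p' : 𝓨 × 𝓧 × 𝓩 → ℝ := fun q => p (q.2.1, q.1, q.2.2) with hp'def
  have hp' : IsPMF p' := by
    refine ⟨fun a => hp.1 _, ?_⟩
    rw [← hp.2]
    exact Fintype.sum_equiv
      ⟨fun q => (q.2.1, q.1, q.2.2), fun q => (q.2.1, q.1, q.2.2),
        fun ⟨_, _, _⟩ => rfl, fun ⟨_, _, _⟩ => rfl⟩ _ _ fun a => rfl
  have hZ : margZ p' = margZ p := funext fun z => Finset.sum_comm
  have h1 : miZX p' = miZY p := by unfold miZX miZY; rw [hZ]; rfl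
  have h2 : miZY p' = miZX p := by unfold miZY miZX; rw [hZ]; rfl
  have h3 : miZXY p' = miZXY p := by
    unfold miZXY
    rw [hZ]
    exact Finset.sum_comm
  have h4 : IprXY p' = IprYX p := by unfold IprXY IprYX; rw [hZ]; rfl
  have h := key p' hp'
  rw [h1, h2, h3, h4] at h
  linarith

end Main4

/-- Non-negativity of the synergy term:
`I(Z;X,Y) − I(Z;X) − I(Z;Y) + I_pr(X↘Y;Z) ≥ 0`; consequently, the synergistic partial
information `I(Z;X,Y) − I(Z;X) − I(Z;Y) + I_red(Z;X,Y) ≥ 0`. -/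
theorem synergy_nonneg
    [Nonempty 𝓧] [Nonempty 𝓨] [Nonempty 𝓩]
    (p : 𝓧 × 𝓨 × 𝓩 → ℝ) (hp : IsPMF p) :
    0 ≤ miZXY p - miZX p - miZY p + IprXY p ∧
      0 ≤ miZXY p - miZX p - miZY p + Ired p := by
  refine ⟨key p hp, ?_⟩
  rcases min_cases (IprXY p) (IprYX p) with ⟨h, _⟩ | ⟨h, _⟩
  · rw [Ired, h]
    exact key p hp
  · rw [Ired, h]
    exact key' p hp
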